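/- Let c, z ∈ ℂ, let S be a finite nonempty set of positive integers with a complex ratio r_j, |r_j| > 1, assigned to each j ∈ S, let k ∈ S, and let f_k(w) = exp(c·w^k). Then both geometric sampling products below converge unconditionally and P(f_k, S, z) = P(f_k, S ∖ {k}, z); that is, ∏' over tuples (n_j)_{j∈S} of positive integers of f_k((∏_{j∈S} X_{j,n_j}(r_j))·z) equals ∏' over tuples (n_j)_{j∈S∖{k}} of positive integers of f_k((∏_{j∈S∖{k}} X_{j,n_j}(r_j))·z) (with the convention that the product over the empty index set S∖{k} = ∅ is f_k(z)). In the product P(f_k, S), the factor f_k effectively removes the integer k from S. -/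

import Mathlib

open Complex

set_option maxHeartbeats 1000000

/-- Geometric sampling point `X_{k,n}(r) = (r^k - 1)^{1/k} / r^n` (principal branch). -/
noncomputable def X (k n : ℕ) (r : ℂ) : ℂ := (r ^ k - 1) ^ ((k : ℂ))⁻¹ / r ^ n


lemma pnat_geom {q : ℂ} (h : ‖q‖ < 1) :
    HasSum (fun n : ℕ+ => q ^ (n : ℕ)) (q * (1 - q)⁻¹) := by
  refine (Equiv.pnatEquivNat.symm.hasSum_iff).mp ?_
  have h0 : HasSum (fun m : ℕ => q * q ^ m) (q * (1 - q)⁻¹) :=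
    (hasSum_geometric_of_norm_lt_one h).mul_left q
  refine h0.congr_fun (fun m => ?_)
  show q ^ ((Equiv.pnatEquivNat.symm m : ℕ+) : ℕ) = q * q ^ m
  simp [Equiv.pnatEquivNat, pow_succ']

lemma pnat_geom_norm {q : ℂ} (h : ‖q‖ < 1) :
    Summable (fun n : ℕ+ => ‖q ^ (n : ℕ)‖) := by
  refine (Equiv.pnatEquivNat.symm.summable_iff).mp ?_
  have h0 : Summable (fun m : ℕ => ‖q‖ * ‖q‖ ^ m) :=
    (summable_geometric_of_lt_one (norm_nonneg q) h).mul_left _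
  refine h0.congr (fun m => ?_)
  show ‖q‖ * ‖q‖ ^ m = ‖q ^ ((Equiv.pnatEquivNat.symm m : ℕ+) : ℕ)‖
  simp [Equiv.pnatEquivNat, norm_pow, pow_succ']


section Main
variable (c z : ℂ) (S : Finset ℕ) (r : ℕ → ℂ) (k : ℕ)

noncomputable def Fj (j : ℕ) (n : ℕ+) : ℂ := X j n (r j) ^ k
noncomputable def aj (j : ℕ) : ℂ :=
  ((r j ^ j - 1) ^ ((j : ℂ))⁻¹) ^ k * ((r j ^ k)⁻¹ * (1 - (r j ^ k)⁻¹)⁻¹)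
end Main


def PiP (ι : Type) : Prop := ∀ [Fintype ι] (f : ι → ℕ+ → ℂ) (a : ι → ℂ),
    (∀ i, HasSum (f i) (a i)) → (∀ i, Summable fun n => ‖f i n‖) →
    HasSum (fun ν : ι → ℕ+ => ∏ i, f i (ν i)) (∏ i, a i) ∧
      Summable (fun ν : ι → ℕ+ => ‖∏ i, f i (ν i)‖)

lemma pi_hasSum (ι : Type) [Finite ι] : PiP ι := by
  refine Finite.induction_empty_option (P := PiP) ?_ ?_ ?_ ι
  · -- of_equiv
    intro α β e IH
    intro instβ f a h1 h2
    haveI : Fintype α := Fintype.ofEquiv β e.symm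
    obtain ⟨HS, NS⟩ := IH (fun i => f (e i)) (fun i => a (e i))
      (fun i => h1 (e i)) (fun i => h2 (e i))
    have hprod : ∀ ν : α → ℕ+,
        (∏ i : β, f i (ν (e.symm i))) = ∏ j : α, f (e j) (ν j) := by
      intro ν
      refine (Fintype.prod_equiv e (fun j : α => f (e j) (ν j))
        (fun i : β => f i (ν (e.symm i))) (fun j => by
          show f (e j) (ν j) = f (e j) (ν (e.symm (e j)))
          rw [e.symm_apply_apply])).symm
    have haa : ∏ i : β, a i = ∏ j : α, a (e j) :=
      (Fintype.prod_equiv e (fun j => a (e j)) a (fun j => rfl)).symm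
    have hcomp : ((fun μ : β → ℕ+ => ∏ i : β, f i (μ i)) ∘ (Equiv.arrowCongr e (Equiv.refl ℕ+)))
        = fun ν : α → ℕ+ => ∏ j : α, f (e j) (ν j) := by
      funext ν
      simp only [Function.comp_apply, Equiv.arrowCongr_apply, Equiv.coe_refl,
        Function.comp, id_eq]
      exact hprod ν
    constructor
    · refine ((Equiv.arrowCongr e (Equiv.refl ℕ+)).hasSum_iff).mp ?_
      rw [haa, hcomp]
      exact HS
    · refine ((Equiv.arrowCongr e (Equiv.refl ℕ+)).summable_iff).mp ?_
      exact NS.congr (fun ν => (congrArg norm (congrFun hcomp ν)).symm)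
  · -- empty
    intro inst f a h1 h2
    haveI : Finite (PEmpty → ℕ+) := Finite.of_subsingleton
    have h1' : HasSum (fun ν : PEmpty → ℕ+ => ∏ i, f i (ν i)) (∏ i, a i) := by
      have := hasSum_single (f := fun ν : PEmpty → ℕ+ => ∏ i, f i (ν i))
        (fun x => x.elim) (fun b' hb' => absurd (Subsingleton.elim _ _) hb')
      convert this using 1
      simp
    exact ⟨h1', Summable.of_finite⟩
  · -- option
    intro α instα IH
    intro inst2 f a h1 h2
    obtain rfl : inst2 = instFintypeOption := Subsingleton.elim _ _
    obtain ⟨HS, NS⟩ := IH (fun i => f (some i)) (fun i => a (some i))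
      (fun i => h1 (some i)) (fun i => h2 (some i))
    have hprod : ∀ p : ℕ+ × (α → ℕ+),
        (∏ i : Option α, f i ((Equiv.piOptionEquivProd (β := fun _ => ℕ+)).symm p i))
          = f none p.1 * ∏ i : α, f (some i) (p.2 i) := by
      intro p
      rw [Fintype.prod_option]
      rfl
    have key : HasSum (fun p : ℕ+ × (α → ℕ+) => f none p.1 * ∏ i : α, f (some i) (p.2 i))
        (a none * ∏ i : α, a (some i)) :=
      HasSum.mul (f := fun n => f none n)
        (g := fun ν : α → ℕ+ => ∏ i, f (some i) (ν i)) (h1 none) HS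
        (summable_mul_of_summable_norm (f := fun n => f none n)
          (g := fun ν : α → ℕ+ => ∏ i, f (some i) (ν i)) (h2 none) NS)
    constructor
    · refine ((Equiv.piOptionEquivProd (β := fun _ => ℕ+)).symm.hasSum_iff).mp ?_
      rw [Fintype.prod_option]
      exact key.congr_fun (fun p => hprod p)
    · refine ((Equiv.piOptionEquivProd (β := fun _ => ℕ+)).symm.summable_iff).mp ?_
      refine (Summable.mul_norm (f := fun n => f none n)
        (g := fun ν : α → ℕ+ => ∏ i, f (some i) (ν i)) (h2 none) NS).congr (fun p => ?_)
      show ‖_ * _‖ = ‖∏ i : Option α, f i _‖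
      rw [hprod p, norm_mul]

/-- for the function factor `f_k(w) = exp (c * w^k)` and `k ∈ S`, the geometric
sampling products over `S` and over `S \ {k}` both converge unconditionally and are equal:
`P(f_k, S, z) = P(f_k, S \ {k}, z)` (with the convention `P(f_k, ∅, z) = f_k z`, which is
automatic here since the empty tuple type has exactly one element). -/
theorem stmt_2 (c z : ℂ) (S : Finset ℕ) (hS : S.Nonempty) (h0 : 0 ∉ S)
    (r : ℕ → ℂ) (hr : ∀ j ∈ S, 1 < ‖r j‖)
    (k : ℕ) (hk : k ∈ S) :
    Multipliable (fun ν : {x // x ∈ S} → ℕ+ =>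
      Complex.exp (c * ((∏ j : {x // x ∈ S}, X j.1 (ν j : ℕ) (r j.1)) * z) ^ k)) ∧
    Multipliable (fun ν : {x // x ∈ S.erase k} → ℕ+ =>
      Complex.exp (c * ((∏ j : {x // x ∈ S.erase k}, X j.1 (ν j : ℕ) (r j.1)) * z) ^ k)) ∧
    (∏' ν : {x // x ∈ S} → ℕ+,
      Complex.exp (c * ((∏ j : {x // x ∈ S}, X j.1 (ν j : ℕ) (r j.1)) * z) ^ k)) =
    (∏' ν : {x // x ∈ S.erase k} → ℕ+,
      Complex.exp (c * ((∏ j : {x // x ∈ S.erase k}, X j.1 (ν j : ℕ) (r j.1)) * z) ^ k)) := by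
  have hk0 : k ≠ 0 := fun h => h0 (h ▸ hk)
  have hq : ∀ j ∈ S, ‖(r j ^ k)⁻¹‖ < 1 := by
    intro j hj
    rw [norm_inv, norm_pow]
    have h1 : 1 < ‖r j‖ := by exact hr j hj
    have h2 : 1 < ‖r j‖ ^ k := one_lt_pow₀ h1 hk0
    rw [inv_lt_one_iff₀]
    right; exact h2
  have hFa : ∀ j ∈ S, HasSum (Fj r k j) (aj r k j) := by
    intro j hj
    have hfun : Fj r k j = fun n : ℕ+ =>
        ((r j ^ j - 1) ^ ((j : ℂ))⁻¹) ^ k * ((r j ^ k)⁻¹) ^ (n : ℕ) := by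
      funext n
      simp only [Fj, X, div_pow]
      rw [div_eq_mul_inv, ← pow_mul, mul_comm (n : ℕ) k, pow_mul, ← inv_pow]
    rw [hfun]
    exact (pnat_geom (hq j hj)).mul_left _
  have hFn : ∀ j ∈ S, Summable fun n => ‖Fj r k j n‖ := by
    intro j hj
    have h := (pnat_geom_norm (hq j hj)).mul_left ‖((r j ^ j - 1) ^ ((j : ℂ))⁻¹) ^ k‖
    refine h.congr (fun n => ?_)
    simp only [Fj, X, norm_div, norm_pow, norm_inv, norm_mul]
    rw [div_pow, inv_pow, ← pow_mul, mul_comm k (n : ℕ), ← div_eq_mul_inv, pow_mul]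
  have hak : aj r k k = 1 := by
    have hr0 : r k ≠ 0 := by
      intro h
      have := hr k hk
      rw [h] at this
      simp only [norm_zero] at this
      exact absurd this (by norm_num)
    have hrk0 : r k ^ k ≠ 0 := pow_ne_zero _ hr0
    have hne1 : r k ^ k ≠ 1 := by
      intro h
      have h2 : 1 < ‖r k‖ ^ k := one_lt_pow₀ (by exact hr k hk) hk0
      rw [← norm_pow, h] at h2; simp at h2
    have hsub : r k ^ k - 1 ≠ 0 := sub_ne_zero.mpr hne1
    unfold aj
    rw [Complex.cpow_nat_inv_pow _ hk0]
    have h5 : 1 - (r k ^ k)⁻¹ = (r k ^ k - 1) * (r k ^ k)⁻¹ := by field_simp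
    rw [h5]
    field_simp
  obtain ⟨HS_S, NS_S⟩ := pi_hasSum {x // x ∈ S} (fun j => Fj r k j.1) (fun j => aj r k j.1)
      (fun j => hFa j.1 j.2) (fun j => hFn j.1 j.2)
  obtain ⟨HS_E, NS_E⟩ := pi_hasSum {x // x ∈ S.erase k}
      (fun j => Fj r k j.1) (fun j => aj r k j.1)
      (fun j => hFa j.1 (Finset.mem_of_mem_erase j.2))
      (fun j => hFn j.1 (Finset.mem_of_mem_erase j.2))
  have hfunS : (fun ν : {x // x ∈ S} → ℕ+ =>
      Complex.exp (c * ((∏ j : {x // x ∈ S}, X j.1 (ν j : ℕ) (r j.1)) * z) ^ k))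
      = cexp ∘ (fun ν : {x // x ∈ S} → ℕ+ =>
        (c * z ^ k) * ∏ j : {x // x ∈ S}, Fj r k j.1 (ν j)) := by
    funext ν
    simp only [Function.comp_apply]
    congr 1
    rw [mul_pow, ← Finset.prod_pow]
    simp only [Fj]
    ring
  have hfunE : (fun ν : {x // x ∈ S.erase k} → ℕ+ =>
      Complex.exp (c * ((∏ j : {x // x ∈ S.erase k}, X j.1 (ν j : ℕ) (r j.1)) * z) ^ k))
      = cexp ∘ (fun ν : {x // x ∈ S.erase k} → ℕ+ =>
        (c * z ^ k) * ∏ j : {x // x ∈ S.erase k}, Fj r k j.1 (ν j)) := by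
    funext ν
    simp only [Function.comp_apply]
    congr 1
    rw [mul_pow, ← Finset.prod_pow]
    simp only [Fj]
    ring
  have HP_S : HasProd (fun ν : {x // x ∈ S} → ℕ+ =>
      Complex.exp (c * ((∏ j : {x // x ∈ S}, X j.1 (ν j : ℕ) (r j.1)) * z) ^ k))
      (cexp ((c * z ^ k) * ∏ j : {x // x ∈ S}, aj r k j.1)) := by
    rw [hfunS]
    exact (HS_S.mul_left _).cexp
  have HP_E : HasProd (fun ν : {x // x ∈ S.erase k} → ℕ+ =>
      Complex.exp (c * ((∏ j : {x // x ∈ S.erase k}, X j.1 (ν j : ℕ) (r j.1)) * z) ^ k))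
      (cexp ((c * z ^ k) * ∏ j : {x // x ∈ S.erase k}, aj r k j.1)) := by
    rw [hfunE]
    exact (HS_E.mul_left _).cexp
  have hprod_eq : (∏ j : {x // x ∈ S}, aj r k j.1)
      = ∏ j : {x // x ∈ S.erase k}, aj r k j.1 := by
    rw [Finset.prod_coe_sort, Finset.prod_coe_sort,
      ← Finset.mul_prod_erase S _ hk, hak, one_mul]
  exact ⟨HP_S.multipliable, HP_E.multipliable,
    by rw [HP_S.tprod_eq, HP_E.tprod_eq, hprod_eq]⟩
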